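/- Let M₁ ∈ ℝ^{n×n} and M₂ ∈ ℝ^{k×k} be symmetric positive semidefinite and let F ∈ ℝ^{n×k}. Then for every x₁ ∈ E(0, M₁) ⊆ ℝ^n and every x₂ ∈ E(0, M₂) ⊆ ℝ^k, it holds that x₁ᵀ F x₂ ≤ √(λ_max(F M₂ Fᵀ M₁)), where all eigenvalues of F M₂ Fᵀ M₁ are real and nonnegative, and λ_max denotes the largest one. -/

import Mathlib

open Matrix

/-- Membership in the ellipsoid `E(m, M)` defined via its support function. -/
def inEllipsoid {n : ℕ} (m : Fin n → ℝ) (M : Matrix (Fin n) (Fin n) ℝ)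
    (x : Fin n → ℝ) : Prop :=
  ∀ l : Fin n → ℝ, l ⬝ᵥ x ≤ l ⬝ᵥ m + Real.sqrt (l ⬝ᵥ (M *ᵥ l))

/-- The set of (complex) eigenvalues of a real square matrix, i.e. its spectrum over `ℂ`. -/
def cEigs {d : ℕ} (A : Matrix (Fin d) (Fin d) ℝ) : Set ℂ :=
  spectrum ℂ (A.map (algebraMap ℝ ℂ))

/-- The maximum-in-real-part eigenvalue of a real square matrix. -/
noncomputable def lmax {d : ℕ} (A : Matrix (Fin d) (Fin d) ℝ) : ℝ :=
  sSup (Complex.re '' cEigs A)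

section Helpers

open Polynomial
open scoped ComplexOrder

variable {d : ℕ} {𝕜 : Type*} [Field 𝕜]

open scoped MatrixOrder in
/-- Square root of a positive semidefinite matrix. -/
noncomputable def Matrix.PosSemidef.sqrt {m : Type*} [Fintype m] [DecidableEq m]
    {A : Matrix m m ℝ} (_hA : A.PosSemidef) : Matrix m m ℝ :=
  CFC.sqrt A

open scoped MatrixOrder in
lemma Matrix.PosSemidef.sqrt_mul_self {m : Type*} [Fintype m] [DecidableEq m]
    {A : Matrix m m ℝ} (hA : A.PosSemidef) : hA.sqrt * hA.sqrt = A :=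
  CFC.sqrt_mul_sqrt_self A hA.nonneg

open scoped MatrixOrder in
lemma Matrix.PosSemidef.posSemidef_sqrt {m : Type*} [Fintype m] [DecidableEq m]
    {A : Matrix m m ℝ} (hA : A.PosSemidef) : hA.sqrt.PosSemidef :=
  Matrix.nonneg_iff_posSemidef.mp (CFC.sqrt_nonneg A)

private lemma mem_spectrum_iff_det' (B : Matrix (Fin d) (Fin d) 𝕜) (z : 𝕜) :
    z ∈ spectrum 𝕜 B ↔ (algebraMap 𝕜 (Matrix (Fin d) (Fin d) 𝕜) z - B).det = 0 := by
  rw [spectrum.mem_iff, Matrix.isUnit_iff_isUnit_det, isUnit_iff_ne_zero, not_not]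

private lemma eval_charpoly' (B : Matrix (Fin d) (Fin d) 𝕜) (z : 𝕜) :
    B.charpoly.eval z = (algebraMap 𝕜 (Matrix (Fin d) (Fin d) 𝕜) z - B).det := by
  rw [Matrix.charpoly, ← Polynomial.coe_evalRingHom, RingHom.map_det]
  congr 1
  ext i j
  by_cases h : i = j <;>
    simp [h, charmatrix_apply, Matrix.algebraMap_matrix_apply, Matrix.diagonal_apply]

private lemma spectrum_finite' (B : Matrix (Fin d) (Fin d) 𝕜) : (spectrum 𝕜 B).Finite := by
  apply Set.Finite.subset (Polynomial.finite_setOf_isRoot (p := B.charpoly)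
    (B.charpoly_monic.ne_zero))
  intro z hz
  rw [Set.mem_setOf_eq, IsRoot, eval_charpoly']
  exact (mem_spectrum_iff_det' B z).1 hz

private lemma spectrum_mul_comm' (A B : Matrix (Fin d) (Fin d) ℂ) :
    spectrum ℂ (A * B) = spectrum ℂ (B * A) := by
  ext z
  rcases eq_or_ne z 0 with rfl | hz
  · rw [mem_spectrum_iff_det', mem_spectrum_iff_det']
    simp only [map_zero, zero_sub, det_neg, Matrix.det_mul]
    rw [mul_comm A.det]
  · exact spectrum.unit_mem_mul_comm (r := Units.mk0 z hz)

private lemma spec_self_mul_conjTranspose' {e : ℕ} (C : Matrix (Fin d) (Fin e) ℂ) :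
    ∀ z ∈ spectrum ℂ (C * Cᴴ), z.im = 0 ∧ 0 ≤ z.re := by
  intro z hz
  rw [mem_spectrum_iff_det'] at hz
  obtain ⟨v, hv0, hv⟩ := (Matrix.exists_mulVec_eq_zero_iff).2 hz
  have hBv : (C * Cᴴ) *ᵥ v = z • v := by
    have := hv
    rw [Matrix.sub_mulVec, sub_eq_zero] at this
    rw [← this, Algebra.algebraMap_eq_smul_one, Matrix.smul_mulVec, Matrix.one_mulVec]
  set a : ℂ := star v ⬝ᵥ v with ha
  set w : Fin e → ℂ := Cᴴ *ᵥ v with hw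
  have key : z * a = star w ⬝ᵥ w := by
    have h1 : star v ⬝ᵥ ((C * Cᴴ) *ᵥ v) = star w ⬝ᵥ w := by
      rw [← Matrix.mulVec_mulVec, Matrix.dotProduct_mulVec, hw, Matrix.star_mulVec,
        Matrix.conjTranspose_conjTranspose]
    rw [← h1, hBv, dotProduct_smul, smul_eq_mul]
  have haa : 0 ≤ a := dotProduct_star_self_nonneg v
  have hane : a ≠ 0 := fun h => hv0 (dotProduct_star_self_eq_zero.1 h)
  have hww : 0 ≤ star w ⬝ᵥ w := dotProduct_star_self_nonneg w
  rw [Complex.le_def] at haa hww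
  simp only [Complex.zero_re, Complex.zero_im] at haa hww
  have hare : 0 < a.re := by
    rcases lt_or_eq_of_le haa.1 with h | h
    · exact h
    · exact absurd (Complex.ext h.symm haa.2.symm) hane
  have hre : (z * a).re = z.re * a.re := by
    rw [Complex.mul_re, ← haa.2, mul_zero, sub_zero]
  have him : (z * a).im = z.im * a.re := by
    rw [Complex.mul_im, ← haa.2, mul_zero, zero_add]
  constructor
  · have : z.im * a.re = 0 := by rw [← him, key, ← hww.2]
    exact (mul_eq_zero.1 this).resolve_right (ne_of_gt hare)
  · have : 0 ≤ z.re * a.re := by rw [← hre, key]; exact hww.1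
    exact nonneg_of_mul_nonneg_right (by rwa [mul_comm] at this) hare

private lemma map_sub_algebraMap' (H : Matrix (Fin d) (Fin d) ℝ) (t : ℝ) :
    (algebraMap ℝ (Matrix (Fin d) (Fin d) ℝ) t - H).map (algebraMap ℝ ℂ) =
      algebraMap ℂ (Matrix (Fin d) (Fin d) ℂ) (t : ℂ) - H.map (algebraMap ℝ ℂ) := by
  ext i j
  by_cases h : i = j <;>
    simp [h, Matrix.map_apply, Matrix.algebraMap_matrix_apply]

private lemma real_spectrum_subset' (H : Matrix (Fin d) (Fin d) ℝ) {t : ℝ}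
    (ht : t ∈ spectrum ℝ H) : (t : ℂ) ∈ spectrum ℂ (H.map (algebraMap ℝ ℂ)) := by
  rw [mem_spectrum_iff_det'] at ht ⊢
  rw [← map_sub_algebraMap', ← RingHom.mapMatrix_apply, ← RingHom.map_det, ht, map_zero]

private lemma rayleigh_bound' {H : Matrix (Fin d) (Fin d) ℝ} (hH : H.IsHermitian) {c : ℝ}
    (hc : ∀ i, hH.eigenvalues i ≤ c) (u : Fin d → ℝ) :
    u ⬝ᵥ (H *ᵥ u) ≤ c * (u ⬝ᵥ u) := by
  set U : Matrix (Fin d) (Fin d) ℝ := (hH.eigenvectorUnitary : Matrix (Fin d) (Fin d) ℝ) with hUdef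
  have hU : U * star U = 1 := Matrix.mem_unitaryGroup_iff.mp hH.eigenvectorUnitary.2
  have hstar : star U = Uᵀ := by
    rw [Matrix.star_eq_conjTranspose, Matrix.conjTranspose_eq_transpose_of_trivial]
  set D : Matrix (Fin d) (Fin d) ℝ := Matrix.diagonal (RCLike.ofReal ∘ hH.eigenvalues) with hDdef
  set w : Fin d → ℝ := star U *ᵥ u with hwdef
  have step1 : u ⬝ᵥ (H *ᵥ u) = w ⬝ᵥ (D *ᵥ w) := by
    conv_lhs => rw [hH.spectral_theorem, Unitary.conjStarAlgAut_apply]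
    rw [← Matrix.mulVec_mulVec, ← Matrix.mulVec_mulVec, Matrix.dotProduct_mulVec u U,
      ← Matrix.mulVec_transpose, ← hstar]
  have step3 : w ⬝ᵥ w = u ⬝ᵥ u := by
    conv_lhs => rw [hwdef]
    rw [Matrix.dotProduct_mulVec, hstar, Matrix.vecMul_transpose, ← hstar,
      Matrix.mulVec_mulVec, hU, Matrix.one_mulVec]
  have step2 : w ⬝ᵥ (D *ᵥ w) ≤ c * (w ⬝ᵥ w) := by
    have hD : ∀ i, (D *ᵥ w) i = hH.eigenvalues i * w i := by
      intro i
      rw [hDdef, Matrix.mulVec_diagonal]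
      simp
    simp only [dotProduct, hD, Finset.mul_sum]
    apply Finset.sum_le_sum
    intro i _
    nlinarith [hc i, mul_self_nonneg (w i)]
  rw [step1, ← step3]
  exact step2

private lemma mem_range_of_orth' {M : Matrix (Fin d) (Fin d) ℝ} (hM : M.IsHermitian)
    {x : Fin d → ℝ} (hx : ∀ l, M *ᵥ l = 0 → l ⬝ᵥ x = 0) : ∃ w, x = M *ᵥ w := by
  classical
  set T : EuclideanSpace ℝ (Fin d) →ₗ[ℝ] EuclideanSpace ℝ (Fin d) := Matrix.toEuclideanLin M
  have hT : ∀ v : EuclideanSpace ℝ (Fin d), (T v : Fin d → ℝ) = M *ᵥ (v : Fin d → ℝ) := by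
    intro v; rfl
  have hsym : T.IsSymmetric := (Matrix.isHermitian_iff_isSymmetric).mp hM
  have hle : LinearMap.range T ≤ (LinearMap.ker T)ᗮ := by
    rintro y ⟨z, rfl⟩
    intro l hl
    rw [LinearMap.mem_ker] at hl
    rw [← hsym l z, hl, inner_zero_left]
  have heq : LinearMap.range T = (LinearMap.ker T)ᗮ := by
    apply Submodule.eq_of_le_of_finrank_le hle
    have h1 := Submodule.finrank_add_finrank_orthogonal (K := LinearMap.ker T)
    have h2 := LinearMap.finrank_range_add_finrank_ker T
    omega
  set x' : EuclideanSpace ℝ (Fin d) := WithLp.toLp 2 x with hx'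
  have hxmem : x' ∈ (LinearMap.ker T)ᗮ := by
    rw [Submodule.mem_orthogonal]
    intro l hl
    rw [LinearMap.mem_ker] at hl
    have hMl : M *ᵥ l = 0 := by rw [← hT l]; exact congrArg WithLp.ofLp hl
    simpa [PiLp.inner_apply, dotProduct, mul_comm, hx'] using hx l hMl
  rw [← heq] at hxmem
  obtain ⟨w, hw⟩ := hxmem
  refine ⟨w, ?_⟩
  rw [← hT w, hw]

private lemma ellipsoid_extract' {M : Matrix (Fin d) (Fin d) ℝ} (hM : M.PosSemidef)
    {x : Fin d → ℝ} (hx : inEllipsoid 0 M x) :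
    ∃ u, u ⬝ᵥ u ≤ 1 ∧ x = hM.sqrt *ᵥ u := by
  have hx' : ∀ l : Fin d → ℝ, l ⬝ᵥ x ≤ Real.sqrt (l ⬝ᵥ (M *ᵥ l)) := by
    intro l
    simpa using hx l
  have hker : ∀ l, M *ᵥ l = 0 → l ⬝ᵥ x = 0 := by
    intro l hl
    have h1 : l ⬝ᵥ x ≤ 0 := by simpa [hl] using hx' l
    have h2 : -(l ⬝ᵥ x) ≤ 0 := by
      simpa [Matrix.mulVec_neg, hl, neg_dotProduct] using hx' (-l)
    linarith
  obtain ⟨w, hw⟩ := mem_range_of_orth' hM.1 hker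
  set S := hM.sqrt with hS
  have hSS : S * S = M := hM.sqrt_mul_self
  have hSsymm : Sᵀ = S := by
    rw [← Matrix.conjTranspose_eq_transpose_of_trivial]
    exact hM.posSemidef_sqrt.1
  refine ⟨S *ᵥ w, ?_, ?_⟩
  · have huu : (S *ᵥ w) ⬝ᵥ (S *ᵥ w) = w ⬝ᵥ x := by
      rw [Matrix.dotProduct_mulVec, ← Matrix.mulVec_transpose, hSsymm,
        Matrix.mulVec_mulVec, hSS, ← hw, dotProduct_comm]
    rw [huu]
    have hbound : w ⬝ᵥ x ≤ Real.sqrt (w ⬝ᵥ x) := by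
      have := hx' w
      rwa [← hw] at this
    have ht0 : 0 ≤ w ⬝ᵥ x := by
      rw [← huu]
      exact Finset.sum_nonneg fun i _ => mul_self_nonneg _
    nlinarith [Real.sq_sqrt ht0, Real.sqrt_nonneg (w ⬝ᵥ x)]
  · rw [Matrix.mulVec_mulVec, hSS, hw]

private lemma map_mul_rect {d e g : ℕ} (A : Matrix (Fin d) (Fin e) ℝ) (B : Matrix (Fin e) (Fin g) ℝ) :
    (A * B).map (algebraMap ℝ ℂ) = A.map (algebraMap ℝ ℂ) * B.map (algebraMap ℝ ℂ) := by
  ext i j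
  simp [Matrix.mul_apply, Matrix.map_apply, map_sum]

private lemma dot_quadform {d e : ℕ} (A : Matrix (Fin d) (Fin e) ℝ)
    (Q : Matrix (Fin d) (Fin d) ℝ) (u : Fin e → ℝ) :
    (A *ᵥ u) ⬝ᵥ (Q *ᵥ (A *ᵥ u)) = u ⬝ᵥ ((Aᵀ * Q * A) *ᵥ u) := by
  rw [dotProduct_comm, Matrix.dotProduct_mulVec, ← Matrix.mulVec_transpose A,
    dotProduct_comm, Matrix.mulVec_mulVec, Matrix.mulVec_mulVec]

end Helpers

theorem x1Fx2_bound {n k : ℕ} (M₁ : Matrix (Fin n) (Fin n) ℝ)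
    (M₂ : Matrix (Fin k) (Fin k) ℝ) (F : Matrix (Fin n) (Fin k) ℝ)
    (hM₁ : M₁.PosSemidef) (hM₂ : M₂.PosSemidef) :
    (∀ z ∈ cEigs (F * M₂ * Fᵀ * M₁), z.im = 0 ∧ 0 ≤ z.re) ∧
      ∀ x₁ x₂ : _, inEllipsoid 0 M₁ x₁ → inEllipsoid 0 M₂ x₂ →
        x₁ ⬝ᵥ (F *ᵥ x₂) ≤ Real.sqrt (lmax (F * M₂ * Fᵀ * M₁)) := by
  set S₁ := hM₁.sqrt with hS₁def
  set S₂ := hM₂.sqrt with hS₂def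
  have hS₁S₁ : S₁ * S₁ = M₁ := hM₁.sqrt_mul_self
  have hS₂S₂ : S₂ * S₂ = M₂ := hM₂.sqrt_mul_self
  have hS₁t : S₁ᵀ = S₁ := by
    rw [← Matrix.conjTranspose_eq_transpose_of_trivial]
    exact hM₁.posSemidef_sqrt.1
  have hS₂t : S₂ᵀ = S₂ := by
    rw [← Matrix.conjTranspose_eq_transpose_of_trivial]
    exact hM₂.posSemidef_sqrt.1
  set C : Matrix (Fin n) (Fin k) ℝ := S₁ * F * S₂ with hCdef
  set H : Matrix (Fin n) (Fin n) ℝ := S₁ * (F * M₂ * Fᵀ) * S₁ with hHdef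
  have hHC : H = C * Cᵀ := by
    rw [hHdef, hCdef, Matrix.transpose_mul, Matrix.transpose_mul, hS₁t, hS₂t, ← hS₂S₂]
    simp only [Matrix.mul_assoc]
  have hHpsd : H.PosSemidef := by
    rw [hHC]
    have := Matrix.posSemidef_self_mul_conjTranspose C
    rwa [Matrix.conjTranspose_eq_transpose_of_trivial] at this
  have hspec : cEigs (F * M₂ * Fᵀ * M₁) = spectrum ℂ (H.map (algebraMap ℝ ℂ)) := by
    have h1 : F * M₂ * Fᵀ * M₁ = (F * M₂ * Fᵀ * S₁) * S₁ := by
      rw [← hS₁S₁]; noncomm_ring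
    have h2 : S₁ * (F * M₂ * Fᵀ * S₁) = H := by rw [hHdef]; noncomm_ring
    rw [cEigs, h1, map_mul_rect, spectrum_mul_comm', ← map_mul_rect, h2]
  constructor
  · intro z hz
    rw [hspec] at hz
    have hconj : (C.map (algebraMap ℝ ℂ))ᴴ = Cᵀ.map (algebraMap ℝ ℂ) := by
      rw [show Cᵀ = Cᴴ from (Matrix.conjTranspose_eq_transpose_of_trivial C).symm,
        Matrix.conjTranspose_map]
      intro r
      simp [Complex.conj_ofReal]
    have hmap : H.map (algebraMap ℝ ℂ) =
        (C.map (algebraMap ℝ ℂ)) * (C.map (algebraMap ℝ ℂ))ᴴ := by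
      rw [hHC, map_mul_rect, hconj]
    exact spec_self_mul_conjTranspose' _ z (hmap ▸ hz)
  · intro x₁ x₂ hx₁ hx₂
    rcases Nat.eq_zero_or_pos n with hn | hn
    · subst hn
      have h0 : x₁ ⬝ᵥ (F *ᵥ x₂) = 0 := by simp [dotProduct]
      rw [h0]
      exact Real.sqrt_nonneg _
    · set c := lmax (F * M₂ * Fᵀ * M₁) with hcdef
      have hB : BddAbove (Complex.re '' cEigs (F * M₂ * Fᵀ * M₁)) := by
        rw [hspec]
        exact ((spectrum_finite' _).image _).bddAbove
      have heig : ∀ i, hHpsd.1.eigenvalues i ≤ c := by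
        intro i
        have h1 : ((hHpsd.1.eigenvalues i : ℝ) : ℂ) ∈ spectrum ℂ (H.map (algebraMap ℝ ℂ)) :=
          real_spectrum_subset' H (hHpsd.1.eigenvalues_mem_spectrum_real i)
        rw [← hspec] at h1
        have h2 : hHpsd.1.eigenvalues i ∈ Complex.re '' cEigs (F * M₂ * Fᵀ * M₁) :=
          ⟨_, h1, Complex.ofReal_re _⟩
        exact le_csSup hB h2
      have hc0 : 0 ≤ c := le_trans (hHpsd.eigenvalues_nonneg ⟨0, hn⟩) (heig ⟨0, hn⟩)
      obtain ⟨u₁, hu₁, hx₁e⟩ := ellipsoid_extract' hM₁ hx₁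
      have step1 : x₁ ⬝ᵥ (F *ᵥ x₂) = (Fᵀ *ᵥ x₁) ⬝ᵥ x₂ := by
        rw [Matrix.dotProduct_mulVec, ← Matrix.mulVec_transpose]
      have step2 : (Fᵀ *ᵥ x₁) ⬝ᵥ x₂ ≤ Real.sqrt ((Fᵀ *ᵥ x₁) ⬝ᵥ (M₂ *ᵥ (Fᵀ *ᵥ x₁))) := by
        simpa using hx₂ (Fᵀ *ᵥ x₁)
      have step3 : (Fᵀ *ᵥ x₁) ⬝ᵥ (M₂ *ᵥ (Fᵀ *ᵥ x₁)) ≤ c := by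
        rw [hx₁e, Matrix.mulVec_mulVec, dot_quadform]
        have hHeq : (Fᵀ * S₁)ᵀ * M₂ * (Fᵀ * S₁) = H := by
          rw [Matrix.transpose_mul, hS₁t, Matrix.transpose_transpose, hHdef]
          simp only [Matrix.mul_assoc]
        rw [hHeq]
        calc u₁ ⬝ᵥ (H *ᵥ u₁) ≤ c * (u₁ ⬝ᵥ u₁) := rayleigh_bound' hHpsd.1 heig u₁
          _ ≤ c * 1 := mul_le_mul_of_nonneg_left hu₁ hc0
          _ = c := mul_one c
      rw [step1]
      exact le_trans step2 (Real.sqrt_le_sqrt step3)
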